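/- Let T = (A;B) be a 2×2×2 real tensor. If Δ(T) < 0 then rank(T) = 3. -/

import Mathlib

open Matrix BigOperators

/-- Cayley hyperdeterminant (up to sign) of a 2×2×2 tensor given by matrix slices A, B. -/
noncomputable def Delta {F : Type*} [Field F] (A B : Matrix (Fin 2) (Fin 2) F) : F :=
  ((A + B).det - (A - B).det) ^ 2 / 4 - 4 * A.det * B.det

/-- Rank of a 2×2×2 tensor, given as a pair of 2×2 matrix slices. -/
noncomputable def trank3 {F : Type*} [Field F] (T : Fin 2 → Matrix (Fin 2) (Fin 2) F) : ℕ :=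
  sInf {r | ∃ u v w : Fin r → Fin 2 → F, ∀ k i j, T k i j = ∑ s, u s k * v s i * w s j}

/-- Rank of a 2×2×2×2 tensor, given as a 2×2 array of 2×2 matrix slices. -/
noncomputable def trank4 {F : Type*} [Field F] (T : Fin 2 → Fin 2 → Matrix (Fin 2) (Fin 2) F) : ℕ :=
  sInf {r | ∃ u v w z : Fin r → Fin 2 → F,
    ∀ k l i j, T k l i j = ∑ s, u s k * v s l * w s i * z s j}

/-- The 2×2 matrix with columns u and v. -/
def col2 {F : Type*} [Field F] (u v : Fin 2 → F) : Matrix (Fin 2) (Fin 2) F :=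
  Matrix.of fun i j => ![u, v] j i

theorem Ksq (M : Matrix (Fin 2) (Fin 2) ℝ) (β : ℝ) (hβ : β ≠ 0)
    (h2 : β ^ 2 = M.det - M.trace ^ 2 / 4) :
    (β⁻¹ • (M - (M.trace / 2) • 1)) * (β⁻¹ • (M - (M.trace / 2) • 1)) = -1 := by
  obtain ⟨a, b, c, d, rfl⟩ : ∃ a b c d, M = !![a, b; c, d] :=
    ⟨_, _, _, _, Matrix.eta_fin_two M⟩
  simp [Matrix.det_fin_two, Matrix.trace_fin_two] at h2
  ext i j
  fin_cases i <;> fin_cases j <;>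
    simp [Matrix.mul_apply, Fin.sum_univ_two, Matrix.trace_fin_two, Matrix.one_apply] <;>
    field_simp <;>
    first
      | linear_combination
      | linear_combination (4 * β ^ 2 : ℝ) * h2
      | linear_combination (4 - 4 * β ^ 2 : ℝ) * h2
      | linear_combination (4 * β ^ 2 - 4 : ℝ) * h2
      | linear_combination (4 : ℝ) * h2

theorem det_one_add (M : Matrix (Fin 2) (Fin 2) ℝ) :
    (1 + M).det = 1 + M.trace + M.det := by
  simp [Matrix.det_fin_two, Matrix.trace_fin_two, Matrix.one_apply]
  ring

theorem det_one_sub (M : Matrix (Fin 2) (Fin 2) ℝ) :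
    (1 - M).det = 1 - M.trace + M.det := by
  simp [Matrix.det_fin_two, Matrix.trace_fin_two, Matrix.one_apply]
  ring

theorem stmt5 (A B : Matrix (Fin 2) (Fin 2) ℝ) (h : Delta A B < 0) :
    trank3 ![A, B] = 3 := by
  -- A is invertible
  have hAB : 0 < A.det * B.det := by
    have := h
    rw [Delta] at this
    nlinarith [sq_nonneg ((A + B).det - (A - B).det)]
  have hd : A.det ≠ 0 := by
    intro h0
    rw [h0] at hAB; simp at hAB
  set M : Matrix (Fin 2) (Fin 2) ℝ := B * A⁻¹ with hM
  have hMA : M * A = B := by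
    rw [hM, mul_assoc, Matrix.nonsing_inv_mul A (isUnit_iff_ne_zero.2 hd), mul_one]
  have hplus : (A + B).det = (1 + M.trace + M.det) * A.det := by
    rw [show A + B = (1 + M) * A by rw [add_mul, one_mul, hMA], det_mul, det_one_add]
  have hminus : (A - B).det = (1 - M.trace + M.det) * A.det := by
    rw [show A - B = (1 - M) * A by rw [sub_mul, one_mul, hMA], det_mul, det_one_sub]
  have hBdet : B.det = M.det * A.det := by rw [← hMA, det_mul]
  have hDelta : Delta A B = A.det ^ 2 * (M.trace ^ 2 - 4 * M.det) := by
    rw [Delta, hplus, hminus, hBdet]; ring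
  have hdisc : 0 < M.det - M.trace ^ 2 / 4 := by
    rw [hDelta] at h
    have hd2 : 0 < A.det ^ 2 := by positivity
    nlinarith
  set β : ℝ := Real.sqrt (M.det - M.trace ^ 2 / 4) with hβdef
  have hβ2 : β ^ 2 = M.det - M.trace ^ 2 / 4 := Real.sq_sqrt hdisc.le
  have hβ0 : β ≠ 0 := by
    have := Real.sqrt_pos.2 hdisc
    rw [← hβdef] at this; exact ne_of_gt this
  set α : ℝ := M.trace / 2 with hα
  set K : Matrix (Fin 2) (Fin 2) ℝ := β⁻¹ • (M - α • 1) with hK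
  have hK2 : K * K = -1 := Ksq M β hβ0 hβ2
  have hKAmat : β • (K * A) = B - α • A := by
    rw [hK, Matrix.smul_mul, smul_smul, mul_inv_cancel₀ hβ0, one_smul, sub_mul,
      Matrix.smul_mul, one_mul, hMA]
  -- scalar consequences
  have e1 : K 0 0 * K 0 0 + K 0 1 * K 1 0 = -1 := by
    have := congrFun (congrFun hK2 0) 0
    simpa [Matrix.mul_apply, Fin.sum_univ_two, Matrix.one_apply] using this
  have e2 : K 1 0 * K 0 0 + K 1 1 * K 1 0 = 0 := by
    have := congrFun (congrFun hK2 1) 0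
    simpa [Matrix.mul_apply, Fin.sum_univ_two, Matrix.one_apply] using this
  have hK10 : K 1 0 ≠ 0 := by
    intro h0
    rw [h0] at e1
    nlinarith [e1]
  have hBe : ∀ i j, B i j = α * A i j + β * (K i 0 * A 0 j + K i 1 * A 1 j) := by
    intro i j
    have := congrFun (congrFun hKAmat i) j
    simp [Matrix.mul_apply, Fin.sum_univ_two, Matrix.smul_apply, Matrix.sub_apply] at this
    linarith
  -- membership of 3
  have h3 : 3 ∈ {r | ∃ u v w : Fin r → Fin 2 → ℝ,
      ∀ k i j, (![A, B] : Fin 2 → Matrix (Fin 2) (Fin 2) ℝ) k i j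
        = ∑ s, u s k * v s i * w s j} := by
    refine ⟨fun s k => (![![1, α + β], ![0, β], ![-1, -α]] : Fin 3 → Fin 2 → ℝ) s k / K 1 0,
      ![![1 + K 0 0, K 1 0], ![1, 0], ![K 0 0, K 1 0]],
      ![fun j => K 1 0 * A 0 j - K 0 0 * A 1 j,
        fun j => -(K 1 0 * A 0 j - K 0 0 * A 1 j) - A 1 j,
        fun j => (K 1 0 * A 0 j - K 0 0 * A 1 j) - A 1 j], ?_⟩
    intro k i j
    fin_cases k
    · -- slice A
      fin_cases i <;>
        simp [Fin.sum_univ_three] <;>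
        field_simp <;> ring
    · -- slice B
      simp only [Fin.isValue, Fin.mk_one, Matrix.cons_val_one, Matrix.head_cons, Matrix.cons_val_zero]
      rw [hBe i j]
      fin_cases i <;>
        simp [Fin.sum_univ_three] <;>
        field_simp <;>
        first
          | linear_combination
          | linear_combination (A 1 j) * e1
          | linear_combination (-(A 1 j)) * e1
          | linear_combination (β * A 1 j) * e1
          | linear_combination (-(β * A 1 j)) * e1
          | linear_combination (A 1 j) * e2
          | linear_combination (-(A 1 j)) * e2
          | linear_combination (β * A 1 j) * e2
          | linear_combination (-(β * A 1 j)) * e2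
          | linear_combination (A 1 j * β) *
              (mul_left_cancel₀ hK10 (by linear_combination e2) : K 0 0 + K 1 1 = 0)
  -- conclusion
  rw [trank3]
  refine le_antisymm (Nat.sInf_le h3) (le_csInf ⟨3, h3⟩ ?_)
  rintro r ⟨u, v, w, hw⟩
  by_contra hc
  push_neg at hc
  interval_cases r
  · -- r = 0
    have hA : ∀ i j, A i j = 0 := fun i j => by simpa using hw 0 i j
    have hB : ∀ i j, B i j = 0 := fun i j => by simpa using hw 1 i j
    have key : Delta A B = 0 := by
      simp [Delta, Matrix.det_fin_two, Matrix.add_apply, Matrix.sub_apply, hA, hB]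
    rw [key] at h; exact lt_irrefl 0 h
  · -- r = 1
    have hA : ∀ i j, A i j = u 0 0 * v 0 i * w 0 j := fun i j => by
      simpa [Fin.sum_univ_one] using hw 0 i j
    have hB : ∀ i j, B i j = u 0 1 * v 0 i * w 0 j := fun i j => by
      simpa [Fin.sum_univ_one] using hw 1 i j
    have key : Delta A B = 0 := by
      simp only [Delta, Matrix.det_fin_two, Matrix.add_apply, Matrix.sub_apply, hA, hB]
      ring
    rw [key] at h; exact lt_irrefl 0 h
  · -- r = 2
    have hA : ∀ i j, A i j = u 0 0 * v 0 i * w 0 j + u 1 0 * v 1 i * w 1 j := fun i j => by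
      simpa [Fin.sum_univ_two] using hw 0 i j
    have hB : ∀ i j, B i j = u 0 1 * v 0 i * w 0 j + u 1 1 * v 1 i * w 1 j := fun i j => by
      simpa [Fin.sum_univ_two] using hw 1 i j
    have key : Delta A B = ((u 0 0 * u 1 1 - u 1 0 * u 0 1) *
        (v 0 0 * v 1 1 - v 1 0 * v 0 1) * (w 0 0 * w 1 1 - w 1 0 * w 0 1)) ^ 2 := by
      simp only [Delta, Matrix.det_fin_two, Matrix.add_apply, Matrix.sub_apply, hA, hB]
      ring
    rw [key] at h
    exact absurd h (not_lt.2 (sq_nonneg _))
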